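/- Let t ∈ (0,1] and m ≥ 1. Then the integral of the modified Chebyshev polynomial P_{2m}^{(t)} against the semicircle distribution of radius 2√t satisfies ∫_{−2√t}^{2√t} P_{2m}^{(t)}(x) · (1/(2πt)) √(4t − x²) dx = −t if m = 1, and = 0 if m ≥ 2. -/

import Mathlib

open Polynomial Real intervalIntegral

/-- The modified Chebyshev polynomials: `P₀ = 2`, `P₁ = X`,
`P_{k+2} = X·P_{k+1} − t·P_k`. -/
noncomputable def modCheb (t : ℝ) : ℕ → Polynomial ℝ
  | 0 => 2
  | 1 => Polynomial.X
  | (k + 2) => Polynomial.X * modCheb t (k + 1) - Polynomial.C t * modCheb t k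

lemma modCheb_eval_cos (t : ℝ) (ht0 : 0 ≤ t) (θ : ℝ) :
    ∀ k : ℕ, (modCheb t k).eval (2 * Real.sqrt t * Real.cos θ)
      = 2 * (Real.sqrt t) ^ k * Real.cos (k * θ) := by
  have ht : Real.sqrt t * Real.sqrt t = t := Real.mul_self_sqrt ht0
  have key : ∀ k : ℕ,
      (modCheb t k).eval (2 * Real.sqrt t * Real.cos θ)
        = 2 * (Real.sqrt t) ^ k * Real.cos (k * θ) ∧
      (modCheb t (k+1)).eval (2 * Real.sqrt t * Real.cos θ)
        = 2 * (Real.sqrt t) ^ (k+1) * Real.cos ((k+1) * θ) := by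
    intro k
    induction k with
    | zero => constructor <;> simp [modCheb]
    | succ k ih =>
      constructor
      · exact_mod_cast ih.2
      show (modCheb t (k+2)).eval _ = _
      rw [modCheb]
      simp only [Polynomial.eval_sub, Polynomial.eval_mul, Polynomial.eval_X, Polynomial.eval_C,
        ih.1, ih.2]
      have trig : Real.cos (((k:ℝ)+1+1) * θ) + Real.cos ((k:ℝ) * θ)
          = 2 * Real.cos (((k:ℝ)+1) * θ) * Real.cos θ := by
        rw [show ((k:ℝ)+1+1) * θ = ((k:ℝ)+1) * θ + θ by ring,
          show ((k:ℝ)) * θ = ((k:ℝ)+1) * θ - θ by ring, Real.cos_add, Real.cos_sub]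
        ring
      push_cast
      linear_combination (-2 * Real.sqrt t ^ (k+2)) * trig
        + (2 * Real.sqrt t ^ k * Real.cos ((k:ℝ) * θ)) * ht
  exact fun k => (key k).1

lemma int_cos_nat (k : ℕ) (hk : 1 ≤ k) :
    ∫ θ in (0:ℝ)..π, Real.cos (k * θ) = 0 := by
  have hk0 : (k:ℝ) ≠ 0 := Nat.cast_ne_zero.mpr (by omega)
  have h := integral_comp_mul_left (a := (0:ℝ)) (b := π)
    (fun x => Real.cos x) hk0
  simp only [mul_zero] at h
  rw [h, integral_cos]
  simp [Real.sin_nat_mul_pi]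

/-- For `t ∈ (0,1]` and `m ≥ 1`, the integral of `P_{2m}^{(t)}` against the semicircle
distribution of radius `2√t` equals `−t` if `m = 1` and `0` if `m ≥ 2`. -/
theorem stmt_10 (t : ℝ) (ht0 : 0 < t) (ht1 : t ≤ 1) (m : ℕ) (hm : 1 ≤ m) :
    ∫ x in (-(2 * Real.sqrt t))..(2 * Real.sqrt t),
        (modCheb t (2 * m)).eval x * ((1 / (2 * π * t)) * Real.sqrt (4 * t - x ^ 2))
      = if m = 1 then -t else 0 := by
  have hs : 0 < Real.sqrt t := Real.sqrt_pos.mpr ht0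
  have hts : Real.sqrt t * Real.sqrt t = t := Real.mul_self_sqrt ht0.le
  set g : ℝ → ℝ := fun x =>
    (modCheb t (2 * m)).eval x * ((1 / (2 * π * t)) * Real.sqrt (4 * t - x ^ 2)) with hg
  have hgc : Continuous g :=
    (modCheb t (2 * m)).continuous.mul
      (continuous_const.mul ((continuous_const.sub (continuous_pow 2)).sqrt))
  -- change of variables x = 2√t cos θ
  have hderiv : ∀ θ ∈ Set.uIcc (0:ℝ) π,
      HasDerivAt (fun θ => 2 * Real.sqrt t * Real.cos θ)
        (-(2 * Real.sqrt t * Real.sin θ)) θ := by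
    intro θ _
    have := (Real.hasDerivAt_cos θ).const_mul (2 * Real.sqrt t)
    simpa [mul_neg] using this
  have hcov := integral_comp_smul_deriv hderiv
    ((continuous_const.mul Real.continuous_sin).neg.continuousOn) hgc
  simp only [Real.cos_zero, Real.cos_pi, mul_one, Function.comp] at hcov
  rw [show (2 * Real.sqrt t * -1 : ℝ) = -(2 * Real.sqrt t) by ring] at hcov
  have h1 : (∫ x in (-(2 * Real.sqrt t))..(2 * Real.sqrt t), g x)
      = ∫ θ in (0:ℝ)..π, (2 * Real.sqrt t * Real.sin θ) * g (2 * Real.sqrt t * Real.cos θ) := by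
    rw [integral_symm (2 * Real.sqrt t) (-(2 * Real.sqrt t)), ← hcov, ← integral_neg]
    congr 1; ext θ; simp only [smul_eq_mul]; ring
  rw [h1]
  -- simplify integrand on [0, π]
  have h2 : ∀ θ ∈ Set.uIcc (0:ℝ) π,
      (2 * Real.sqrt t * Real.sin θ) * g (2 * Real.sqrt t * Real.cos θ)
        = (4 * t ^ m / π) * (Real.cos (2 * m * θ) * Real.sin θ ^ 2) := by
    intro θ hθ
    rw [Set.uIcc_of_le Real.pi_pos.le] at hθ
    have hsin : 0 ≤ Real.sin θ := Real.sin_nonneg_of_nonneg_of_le_pi hθ.1 hθ.2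
    have hsqrt : Real.sqrt (4 * t - (2 * Real.sqrt t * Real.cos θ) ^ 2)
        = 2 * Real.sqrt t * Real.sin θ := by
      have h4 : 4 * t - (2 * Real.sqrt t * Real.cos θ) ^ 2
          = (2 * Real.sqrt t * Real.sin θ) ^ 2 := by
        have := Real.sin_sq_add_cos_sq θ
        nlinarith [hts]
      rw [h4, Real.sqrt_sq (by positivity)]
    rw [hg]
    simp only [modCheb_eval_cos t ht0.le θ (2 * m), hsqrt]
    have hpow : (Real.sqrt t) ^ (2 * m) = t ^ m := by
      rw [pow_mul, sq, hts]
    rw [hpow]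
    have hπ : (π:ℝ) ≠ 0 := Real.pi_ne_zero
    push_cast
    field_simp
    linear_combination (4 * Real.sin θ^2 * Real.cos (2*(m:ℝ)*θ)) * hts
  rw [integral_congr h2, integral_const_mul]
  -- compute ∫ cos(2mθ) sin²θ
  have hI : ∫ θ in (0:ℝ)..π, Real.cos (2 * m * θ) * Real.sin θ ^ 2
      = if m = 1 then -(π/4) else 0 := by
    have hrw : ∀ θ : ℝ, Real.cos (2 * m * θ) * Real.sin θ ^ 2
        = (1/2) * Real.cos ((2*m : ℕ) * θ) - (1/4) * Real.cos ((2*m+2 : ℕ) * θ)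
          - (1/4) * Real.cos ((2*m-2 : ℕ) * θ) := by
      intro θ
      have h2m : ((2*m - 2 : ℕ) : ℝ) = 2*(m:ℝ) - 2 := by
        push_cast [Nat.cast_sub (by omega : 2 ≤ 2*m)]; ring
      have e1 : ((2*m+2 : ℕ) : ℝ) * θ = 2*(m:ℝ)*θ + 2*θ := by push_cast; ring
      have e2 : ((2*m-2 : ℕ) : ℝ) * θ = 2*(m:ℝ)*θ - 2*θ := by rw [h2m]; ring
      rw [e1, e2, Real.cos_add, Real.cos_sub]
      have hs2 : Real.sin θ ^ 2 = (1 - Real.cos (2*θ))/2 := by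
        rw [Real.cos_two_mul]; have := Real.sin_sq_add_cos_sq θ; nlinarith
      rw [hs2, Real.cos_two_mul]
      push_cast
      ring
    have hic : ∀ (a : ℝ) (n : ℕ), IntervalIntegrable (fun θ => a * Real.cos ((n:ℝ)*θ))
        MeasureTheory.volume 0 π := fun a n =>
      (continuous_const.mul (Real.continuous_cos.comp
        (continuous_const.mul continuous_id))).intervalIntegrable _ _
    rw [integral_congr (fun θ _ => hrw θ),
      integral_sub ((hic (1/2) (2*m)).sub (hic (1/4) (2*m+2))) (hic (1/4) (2*m-2)),
      integral_sub (hic (1/2) (2*m)) (hic (1/4) (2*m+2))]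
    rw [integral_const_mul, integral_const_mul, integral_const_mul]
    rw [int_cos_nat (2*m) (by omega), int_cos_nat (2*m+2) (by omega)]
    rcases eq_or_ne m 1 with h | h
    · subst h
      norm_num
      ring
    · rw [int_cos_nat (2*m-2) (by omega)]
      simp [h]
  rw [hI]
  rcases eq_or_ne m 1 with h | h
  · subst h
    simp only [if_true]
    have hπ : (π:ℝ) ≠ 0 := Real.pi_ne_zero
    field_simp
  · simp [h]
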